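/- Let p be a prime with p ≡ 1 (mod 6) and let n₀₁, n₀₂ be transition numbers of the cubic residue cosets. Then n₀₁ ≠ n₀₂. -/

import Mathlib

/-- `Gcoset p g k` is the coset `G_k = {g^j : j ≡ k (mod 3)}` of the subgroup `G₀` of
cubic residues in `(ℤ/pℤ)*`, where `g` is a fixed generator of `(ℤ/pℤ)*`. -/
def Gcoset (p : ℕ) (g : ZMod p) (k : ZMod 3) : Set (ZMod p) :=
  {x | ∃ j : ℕ, (j : ZMod 3) = k ∧ x = g ^ j}

/-- `transNum p g d i k` is the transition number `n_{ik}(d)`: the number of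
`b ∈ {1,…,p-1}`, `b ≠ p-d`, with `b ∈ G_i` and `b+d ∈ G_k`. -/
noncomputable def transNum (p : ℕ) (g : ZMod p) (d : ℕ) (i k : ZMod 3) : ℕ :=
  Nat.card {b : ℕ // 1 ≤ b ∧ b ≤ p - 1 ∧ b ≠ p - d ∧
    (b : ZMod p) ∈ Gcoset p g i ∧ (b : ZMod p) + (d : ZMod p) ∈ Gcoset p g k}

open Finset

open Classical in
/-- A choice of discrete logarithm to base `g`. -/
noncomputable def dlog (p : ℕ) (g x : ZMod p) : ℕ :=
  if h : ∃ j : ℕ, x = g ^ j then h.choose else 0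

/-- The cyclotomic-class function: which coset of the cubic residues `x` lies in. -/
noncomputable def eC (p : ℕ) (g x : ZMod p) : ZMod 3 := (dlog p g x : ZMod 3)

lemma dlog_spec {p : ℕ} {g x : ZMod p} (h : ∃ j : ℕ, x = g ^ j) :
    x = g ^ dlog p g x := by
  rw [dlog, dif_pos h]; exact h.choose_spec

lemma one_ne' {p : ℕ} (hp : p.Prime) : (1 : ZMod p) ≠ 0 := by
  haveI : Fact p.Prime := ⟨hp⟩
  exact one_ne_zero

section Main

variable {p : ℕ}

lemma seven_le (hp : p.Prime) (hp6 : p % 6 = 1) : 7 ≤ p := by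
  have := hp.two_le; omega

lemma g_ne_zero (hp : p.Prime) (hp6 : p % 6 = 1) {g : ZMod p}
    (hg : ∀ x : ZMod p, x ≠ 0 → ∃ j : ℕ, x = g ^ j) : g ≠ 0 := by
  have h7 := seven_le hp hp6
  have hv2 : ((2 : ℕ) : ZMod p).val = 2 := ZMod.val_cast_of_lt (by omega)
  have h20 : ((2 : ℕ) : ZMod p) ≠ 0 := by
    intro h; rw [h] at hv2; simp at hv2
  intro hg0
  obtain ⟨j, hj⟩ := hg ((2 : ℕ) : ZMod p) h20
  rcases Nat.eq_zero_or_pos j with hj0 | hj0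
  · rw [hj0, pow_zero] at hj
    rw [hj] at hv2
    haveI : Fact (1 < p) := ⟨by omega⟩
    rw [ZMod.val_one] at hv2; omega
  · rw [hg0, zero_pow (by omega)] at hj
    rw [hj] at hv2; simp at hv2

lemma order_g (hp : p.Prime) (hp6 : p % 6 = 1) {g : ZMod p}
    (hg : ∀ x : ZMod p, x ≠ 0 → ∃ j : ℕ, x = g ^ j) : orderOf g = p - 1 := by
  haveI : Fact p.Prime := ⟨hp⟩
  obtain ⟨u, hu⟩ := isUnit_iff_ne_zero.mpr (g_ne_zero hp hp6 hg)
  haveI : NeZero p := ⟨hp.pos.ne'⟩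
  have hall : ∀ v : (ZMod p)ˣ, v ∈ Subgroup.zpowers u := by
    intro v
    obtain ⟨j, hj⟩ := hg (v : ZMod p) (Units.ne_zero v)
    rw [Subgroup.mem_zpowers_iff]
    refine ⟨(j : ℤ), ?_⟩
    rw [zpow_natCast]
    ext
    rw [Units.val_pow_eq_pow_val, hu, ← hj]
  have := orderOf_eq_card_of_forall_mem_zpowers hall
  rw [← hu, orderOf_units, this, Nat.card_eq_fintype_card, ZMod.card_units]

lemma pow_congr (hp : p.Prime) (hp6 : p % 6 = 1) {g : ZMod p}
    (hg : ∀ x : ZMod p, x ≠ 0 → ∃ j : ℕ, x = g ^ j) {a b : ℕ}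
    (h : g ^ a = g ^ b) : (a : ZMod 3) = (b : ZMod 3) := by
  haveI : Fact p.Prime := ⟨hp⟩
  obtain ⟨u, hu⟩ := isUnit_iff_ne_zero.mpr (g_ne_zero hp hp6 hg)
  have hu' : u ^ a = u ^ b := by
    ext; rw [Units.val_pow_eq_pow_val, Units.val_pow_eq_pow_val, hu, h]
  have hmod : a ≡ b [MOD orderOf u] := (pow_eq_pow_iff_modEq).mp hu'
  have hou : orderOf u = p - 1 := by
    rw [← orderOf_units, hu, order_g hp hp6 hg]
  have h3 : (3 : ℕ) ∣ p - 1 := by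
    have := seven_le hp hp6; omega
  rw [hou] at hmod
  exact (ZMod.natCast_eq_natCast_iff a b 3).mpr (hmod.of_dvd h3)

lemma eC_spec {g x : ZMod p} (hg : ∀ x : ZMod p, x ≠ 0 → ∃ j : ℕ, x = g ^ j)
    (hx : x ≠ 0) : x = g ^ dlog p g x := dlog_spec (hg x hx)

lemma mem_Gcoset_iff (hp : p.Prime) (hp6 : p % 6 = 1) {g : ZMod p}
    (hg : ∀ x : ZMod p, x ≠ 0 → ∃ j : ℕ, x = g ^ j) {x : ZMod p} (hx : x ≠ 0)
    {k : ZMod 3} : x ∈ Gcoset p g k ↔ eC p g x = k := by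
  constructor
  · rintro ⟨j, hjk, hxj⟩
    have : g ^ dlog p g x = g ^ j := by rw [← eC_spec hg hx, hxj]
    rw [eC, pow_congr hp hp6 hg this, hjk]
  · intro h
    exact ⟨dlog p g x, h, eC_spec hg hx⟩

lemma eC_mul (hp : p.Prime) (hp6 : p % 6 = 1) {g : ZMod p}
    (hg : ∀ x : ZMod p, x ≠ 0 → ∃ j : ℕ, x = g ^ j) {x y : ZMod p}
    (hx : x ≠ 0) (hy : y ≠ 0) : eC p g (x * y) = eC p g x + eC p g y := by
  haveI : Fact p.Prime := ⟨hp⟩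
  have hxy : x * y ≠ 0 := mul_ne_zero hx hy
  have : g ^ dlog p g (x * y) = g ^ (dlog p g x + dlog p g y) := by
    rw [pow_add, ← eC_spec hg hx, ← eC_spec hg hy, ← eC_spec hg hxy]
  have := pow_congr hp hp6 hg this
  rw [eC, eC, eC, this]; push_cast; ring

lemma eC_one (hp : p.Prime) (hp6 : p % 6 = 1) {g : ZMod p}
    (hg : ∀ x : ZMod p, x ≠ 0 → ∃ j : ℕ, x = g ^ j) : eC p g 1 = 0 := by
  have h1 : (1 : ZMod p) ≠ 0 := one_ne' hp
  have : g ^ dlog p g 1 = g ^ (0 : ℕ) := by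
    rw [pow_zero, ← eC_spec hg h1]
  have := pow_congr hp hp6 hg this
  rw [eC, this, Nat.cast_zero]

lemma eC_inv (hp : p.Prime) (hp6 : p % 6 = 1) {g : ZMod p}
    (hg : ∀ x : ZMod p, x ≠ 0 → ∃ j : ℕ, x = g ^ j) {x : ZMod p}
    (hx : x ≠ 0) : eC p g x⁻¹ = - eC p g x := by
  haveI : Fact p.Prime := ⟨hp⟩
  have hxi : x⁻¹ ≠ 0 := inv_ne_zero hx
  have h := eC_mul hp hp6 hg hx hxi
  rw [mul_inv_cancel₀ hx, eC_one hp hp6 hg] at h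
  linear_combination -h

lemma eC_neg_one (hp : p.Prime) (hp6 : p % 6 = 1) {g : ZMod p}
    (hg : ∀ x : ZMod p, x ≠ 0 → ∃ j : ℕ, x = g ^ j) : eC p g (-1) = 0 := by
  haveI : Fact p.Prime := ⟨hp⟩
  have h7 := seven_le hp hp6
  have hord := order_g hp hp6 hg
  have hpow : g ^ (p - 1) = 1 := by rw [← hord]; exact pow_orderOf_eq_one g
  set y := g ^ ((p - 1) / 2) with hy
  have hy2 : y ^ 2 = 1 := by
    rw [hy, ← pow_mul]
    have : (p - 1) / 2 * 2 = p - 1 := by omega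
    rw [this, hpow]
  have hfac : (y - 1) * (y + 1) = 0 := by ring_nf; linear_combination hy2
  have hyne : y ≠ 1 := by
    intro h
    have : orderOf g ∣ (p - 1) / 2 := orderOf_dvd_of_pow_eq_one h
    rw [hord] at this
    have := Nat.le_of_dvd (by omega) this
    omega
  have hym : y = -1 := by
    rcases mul_eq_zero.mp hfac with h | h
    · exact absurd (by linear_combination h) hyne
    · linear_combination h
  have hne : (-1 : ZMod p) ≠ 0 := by
    intro h
    exact one_ne' hp (by linear_combination -h)
  have : g ^ dlog p g (-1) = g ^ ((p - 1) / 2) := by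
    rw [← eC_spec hg hne, ← hy, hym]
  have hcast := pow_congr hp hp6 hg this
  rw [eC, hcast]
  have h36 : (p - 1) / 2 = 3 * ((p - 1) / 6) := by omega
  rw [h36, Nat.cast_mul]
  have h30 : ((3 : ℕ) : ZMod 3) = 0 := by decide
  rw [h30, zero_mul]

lemma eC_neg (hp : p.Prime) (hp6 : p % 6 = 1) {g : ZMod p}
    (hg : ∀ x : ZMod p, x ≠ 0 → ∃ j : ℕ, x = g ^ j) {x : ZMod p}
    (hx : x ≠ 0) : eC p g (-x) = eC p g x := by
  have hne : (-1 : ZMod p) ≠ 0 := by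
    intro h
    exact one_ne' hp (by linear_combination -h)
  have : -x = -1 * x := by ring
  rw [this, eC_mul hp hp6 hg hne hx, eC_neg_one hp hp6 hg, zero_add]

lemma eC_g (hp : p.Prime) (hp6 : p % 6 = 1) {g : ZMod p}
    (hg : ∀ x : ZMod p, x ≠ 0 → ∃ j : ℕ, x = g ^ j) : eC p g g = 1 := by
  have hg0 := g_ne_zero hp hp6 hg
  have : g ^ dlog p g g = g ^ (1 : ℕ) := by rw [pow_one, ← eC_spec hg hg0]
  have := pow_congr hp hp6 hg this
  rw [eC, this, Nat.cast_one]

/-- The number of `x ∉ {0,1}` with `x ∈ G_i` and `1 - x ∈ G_k`. -/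
noncomputable def Nk (p : ℕ) [NeZero p] (g : ZMod p) (i k : ZMod 3) : ℕ :=
  (((univ : Finset (ZMod p)) \ {0, 1}).filter
    fun x => eC p g x = i ∧ eC p g (1 - x) = k).card

/-- The cyclotomic-class sum function. -/
noncomputable def mC (p : ℕ) (g x : ZMod p) : ZMod 3 := eC p g x + eC p g (1 - x)

/-- The number of `x ∉ {0,1}` with `eC x + eC (1-x) = t`. -/
noncomputable def Ct (p : ℕ) [NeZero p] (g : ZMod p) (t : ZMod 3) : ℕ :=
  (((univ : Finset (ZMod p)) \ {0, 1}).filter fun x => mC p g x = t).card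

lemma sum_zmod3 {M : Type*} [AddCommMonoid M] (f : ZMod 3 → M) :
    ∑ t : ZMod 3, f t = f 0 + f 1 + f 2 := by
  rw [show (univ : Finset (ZMod 3)) = {0, 1, 2} by decide,
    sum_insert (by decide), sum_insert (by decide), sum_singleton, add_assoc]

lemma mem_s_iff {p : ℕ} [NeZero p] {x : ZMod p} :
    x ∈ ((univ : Finset (ZMod p)) \ {0, 1}) ↔ x ≠ 0 ∧ x ≠ 1 := by
  simp [not_or]

/-- `transNum` with `d = 1` equals a fiber count over `ZMod p`. -/
lemma transNum_eq [NeZero p] (hp : p.Prime) (hp6 : p % 6 = 1) {g : ZMod p}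
    (hg : ∀ x : ZMod p, x ≠ 0 → ∃ j : ℕ, x = g ^ j) (i k : ZMod 3) :
    transNum p g 1 i k = Nk p g i k := by
  rw [Nk]
  have h7 := seven_le hp hp6
  haveI : Fact p.Prime := ⟨hp⟩
  set t := (((univ : Finset (ZMod p)) \ {0, 1}).filter
        fun x => eC p g x = i ∧ eC p g (1 - x) = k) with ht
  have hm1 : ((p - 1 : ℕ) : ZMod p) = -1 := by
    rw [Nat.cast_sub (by omega : 1 ≤ p), ZMod.natCast_self, zero_sub, Nat.cast_one]
  have fwd : ∀ b : ℕ, (1 ≤ b ∧ b ≤ p - 1 ∧ b ≠ p - 1 ∧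
      (b : ZMod p) ∈ Gcoset p g i ∧ (b : ZMod p) + ((1:ℕ) : ZMod p) ∈ Gcoset p g k) →
      -((b : ℕ) : ZMod p) ∈ t := by
    rintro b ⟨hb1, hb2, hb3, hbi, hbk⟩
    have hv : ((b : ℕ) : ZMod p).val = b := ZMod.val_cast_of_lt (by omega)
    have hbne0 : ((b : ℕ) : ZMod p) ≠ 0 := by
      intro h; rw [h, ZMod.val_zero] at hv; omega
    have hbne1 : ((b : ℕ) : ZMod p) ≠ -1 := by
      intro h
      rw [← hm1] at h
      have := congrArg ZMod.val h
      rw [hv, ZMod.val_cast_of_lt (by omega)] at this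
      omega
    have hb10 : ((b : ℕ) : ZMod p) + 1 ≠ 0 := by
      intro h
      exact hbne1 (by linear_combination h)
    rw [ht, mem_filter, mem_sdiff]
    refine ⟨⟨mem_univ _, ?_⟩, ?_, ?_⟩
    · simp only [mem_insert, mem_singleton]
      push_neg
      constructor
      · exact fun h => hbne0 (by linear_combination -h)
      · intro h; exact hbne1 (by linear_combination -h)
    · rw [eC_neg hp hp6 hg hbne0]
      exact (mem_Gcoset_iff hp hp6 hg hbne0).mp hbi
    · have : (1 : ZMod p) - -((b : ℕ) : ZMod p) = ((b : ℕ) : ZMod p) + 1 := by ring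
      rw [this]
      rw [Nat.cast_one] at hbk
      exact (mem_Gcoset_iff hp hp6 hg hb10).mp hbk
  have bwd : ∀ x : ZMod p, x ∈ t → (1 ≤ (-x).val ∧ (-x).val ≤ p - 1 ∧ (-x).val ≠ p - 1 ∧
      (((-x).val : ℕ) : ZMod p) ∈ Gcoset p g i ∧
      (((-x).val : ℕ) : ZMod p) + ((1:ℕ) : ZMod p) ∈ Gcoset p g k) := by
    intro x hx
    rw [ht, mem_filter, mem_sdiff] at hx
    obtain ⟨⟨-, hx01⟩, hxi, hxk⟩ := hx
    simp only [mem_insert, mem_singleton] at hx01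
    push_neg at hx01
    obtain ⟨hx0, hx1⟩ := hx01
    have hnx0 : -x ≠ 0 := neg_ne_zero.mpr hx0
    have h1x0 : (1 : ZMod p) - x ≠ 0 := sub_ne_zero.mpr (Ne.symm hx1)
    have hbc : (((-x).val : ℕ) : ZMod p) = -x := ZMod.natCast_rightInverse _
    have hvpos : (-x).val ≠ 0 := fun h => hnx0 ((ZMod.val_eq_zero _).mp h)
    have hvlt : (-x).val < p := ZMod.val_lt _
    refine ⟨by omega, by omega, ?_, ?_, ?_⟩
    · intro h
      rw [h] at hbc
      rw [hm1] at hbc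
      exact hx1 (by linear_combination hbc)
    · rw [hbc]
      refine (mem_Gcoset_iff hp hp6 hg hnx0).mpr ?_
      rw [eC_neg hp hp6 hg hx0]; exact hxi
    · rw [hbc, Nat.cast_one]
      have : -x + 1 = (1 : ZMod p) - x := by ring
      rw [this]
      exact (mem_Gcoset_iff hp hp6 hg h1x0).mpr hxk
  rw [transNum, ← Nat.card_eq_finsetCard t]
  refine Nat.card_congr
    ⟨fun b => ⟨-((b.1 : ℕ) : ZMod p), fwd b.1 b.2⟩,
     fun x => ⟨(-(x.1)).val, bwd x.1 x.2⟩, ?_, ?_⟩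
  · rintro ⟨b, hb⟩
    apply Subtype.ext
    simp only
    rw [neg_neg, ZMod.val_cast_of_lt (by omega : b < p)]
  · rintro ⟨x, hx⟩
    apply Subtype.ext
    simp only
    rw [ZMod.natCast_rightInverse (-x), neg_neg]

lemma Nk_symm [NeZero p] (hp : p.Prime) (hp6 : p % 6 = 1) {g : ZMod p}
    (hg : ∀ x : ZMod p, x ≠ 0 → ∃ j : ℕ, x = g ^ j) (i k : ZMod 3) :
    Nk p g i k = Nk p g k i := by
  rw [Nk, Nk]
  refine Finset.card_nbij' (fun x => 1 - x) (fun x => 1 - x) ?_ ?_ ?_ ?_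
  · intro x hx
    rw [Finset.mem_coe, mem_filter, mem_s_iff] at hx ⊢
    obtain ⟨⟨hx0, hx1⟩, hi, hk⟩ := hx
    refine ⟨⟨sub_ne_zero.mpr (Ne.symm hx1), fun h => hx0 (by linear_combination -h)⟩, hk, ?_⟩
    rw [sub_sub_cancel]; exact hi
  · intro x hx
    rw [Finset.mem_coe, mem_filter, mem_s_iff] at hx ⊢
    obtain ⟨⟨hx0, hx1⟩, hi, hk⟩ := hx
    refine ⟨⟨sub_ne_zero.mpr (Ne.symm hx1), fun h => hx0 (by linear_combination -h)⟩, hk, ?_⟩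
    rw [sub_sub_cancel]; exact hi
  · intro x _; show (1 : ZMod p) - (1 - x) = x; ring
  · intro x _; show (1 : ZMod p) - (1 - x) = x; ring

lemma Nk_inv [NeZero p] (hp : p.Prime) (hp6 : p % 6 = 1) {g : ZMod p}
    (hg : ∀ x : ZMod p, x ≠ 0 → ∃ j : ℕ, x = g ^ j) (i k : ZMod 3) :
    Nk p g i k = Nk p g (-i) (k - i) := by
  haveI : Fact p.Prime := ⟨hp⟩
  rw [Nk, Nk]
  have hmem : ∀ (i k : ZMod 3) (x : ZMod p),
      x ∈ (((univ : Finset (ZMod p)) \ {0, 1}).filter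
        fun x => eC p g x = i ∧ eC p g (1 - x) = k) →
      x⁻¹ ∈ (((univ : Finset (ZMod p)) \ {0, 1}).filter
        fun x => eC p g x = -i ∧ eC p g (1 - x) = k - i) := by
    intro i k x hx
    rw [mem_filter, mem_s_iff] at hx ⊢
    obtain ⟨⟨hx0, hx1⟩, hi, hk⟩ := hx
    have h1x : (1 : ZMod p) - x ≠ 0 := sub_ne_zero.mpr (Ne.symm hx1)
    refine ⟨⟨inv_ne_zero hx0, fun h => hx1 (by rwa [inv_eq_one] at h)⟩, ?_, ?_⟩
    · rw [eC_inv hp hp6 hg hx0, hi]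
    · have hrw : (1 : ZMod p) - x⁻¹ = -(1 - x) * x⁻¹ := by
        field_simp
        ring
      rw [hrw, eC_mul hp hp6 hg (neg_ne_zero.mpr h1x) (inv_ne_zero hx0),
        eC_neg hp hp6 hg h1x, eC_inv hp hp6 hg hx0, hi, hk]
      ring
  refine Finset.card_nbij' (fun x => x⁻¹) (fun x => x⁻¹) (hmem i k) ?_ ?_ ?_
  · intro x hx
    have h2 := hmem (-i) (k - i) x hx
    have h3 : k - i - -i = k := by ring
    rwa [neg_neg, h3] at h2
  · intro x hx
    rw [Finset.mem_coe, mem_filter, mem_s_iff] at hx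
    exact inv_inv x
  · intro x hx
    rw [Finset.mem_coe, mem_filter, mem_s_iff] at hx
    exact inv_inv x

lemma Ct_eq [NeZero p] (hp : p.Prime) (hp6 : p % 6 = 1) {g : ZMod p}
    (hg : ∀ x : ZMod p, x ≠ 0 → ∃ j : ℕ, x = g ^ j) (t : ZMod 3) :
    Ct p g t = Nk p g 0 t + Nk p g 1 (t - 1) + Nk p g 2 (t - 2) := by
  rw [Ct]
  rw [Finset.card_eq_sum_card_fiberwise
    (f := fun x => eC p g x) (t := (univ : Finset (ZMod 3))) (fun x _ => mem_univ _)]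
  have heach : ∀ i : ZMod 3,
      (((((univ : Finset (ZMod p)) \ {0, 1}).filter fun x => mC p g x = t).filter
        fun x => eC p g x = i)).card = Nk p g i (t - i) := by
    intro i
    rw [filter_filter, Nk]
    congr 1
    apply filter_congr
    intro x _
    simp only [mC]
    constructor
    · rintro ⟨h1, h2⟩
      exact ⟨h2, by rw [← h1, h2]; ring⟩
    · rintro ⟨h1, h2⟩
      exact ⟨by rw [h1, h2]; ring, h1⟩
  rw [sum_zmod3 (fun i => ((((univ : Finset (ZMod p)) \ {0, 1}).filter
        fun x => mC p g x = t).filter fun x => eC p g x = i).card),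
    heach 0, heach 1, heach 2, sub_zero]

end Main

theorem stmt_8 (p : ℕ) (hp : p.Prime) (hp6 : p % 6 = 1)
    (g : ZMod p) (hg : ∀ x : ZMod p, x ≠ 0 → ∃ j : ℕ, x = g ^ j) :
    transNum p g 1 0 1 ≠ transNum p g 1 0 2 := by
  intro hEq
  haveI : Fact p.Prime := ⟨hp⟩
  haveI : NeZero p := ⟨hp.pos.ne'⟩
  have h7 := seven_le hp hp6
  have hg0 := g_ne_zero hp hp6 hg
  -- a primitive cube root of unity in ℂ
  have hω : IsPrimitiveRoot (Complex.exp (2 * Real.pi * Complex.I / 3)) 3 :=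
    Complex.isPrimitiveRoot_exp 3 (by norm_num)
  set ω : ℂ := Complex.exp (2 * Real.pi * Complex.I / 3) with hωdef
  have hω3 : ω ^ 3 = 1 := hω.pow_eq_one
  have hωn : ∀ n : ℕ, ω ^ n = ω ^ (n % 3) := by
    intro n
    conv_lhs => rw [← Nat.div_add_mod n 3]
    rw [pow_add, pow_mul, hω3, one_pow, one_mul]
  set φ : ZMod 3 → ℂ := fun t => ω ^ t.val with hφdef
  have φ_add : ∀ a b : ZMod 3, φ (a + b) = φ a * φ b := by
    intro a b
    show ω ^ (a + b).val = ω ^ a.val * ω ^ b.val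
    rw [← pow_add, ZMod.val_add, ← hωn]
  have hφ0 : φ 0 = 1 := by
    show ω ^ (0 : ZMod 3).val = 1
    rw [show (0 : ZMod 3).val = 0 from rfl, pow_zero]
  have hφ1 : φ 1 = ω := by
    show ω ^ (1 : ZMod 3).val = ω
    rw [show (1 : ZMod 3).val = 1 from rfl, pow_one]
  have hφ2 : φ 2 = ω ^ 2 := by
    show ω ^ (2 : ZMod 3).val = ω ^ 2
    rw [show (2 : ZMod 3).val = 2 from rfl]
  -- the cubic character
  set χ : MulChar (ZMod p) ℂ :=
    { toFun := fun x => if x = 0 then 0 else φ (eC p g x)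
      map_one' := by
        show (if (1 : ZMod p) = 0 then (0 : ℂ) else φ (eC p g 1)) = 1
        rw [if_neg (one_ne' hp), eC_one hp hp6 hg, hφ0]
      map_mul' := by
        intro x y
        show (if x * y = 0 then (0 : ℂ) else φ (eC p g (x * y))) =
          (if x = 0 then (0 : ℂ) else φ (eC p g x)) *
            (if y = 0 then (0 : ℂ) else φ (eC p g y))
        by_cases hx : x = 0
        · simp [hx]
        by_cases hy : y = 0
        · simp [hy]
        rw [if_neg hx, if_neg hy, if_neg (mul_ne_zero hx hy),
          eC_mul hp hp6 hg hx hy, φ_add]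
      map_nonunit' := by
        intro a ha
        rw [isUnit_iff_ne_zero, not_not] at ha
        rw [if_pos ha] } with hχdef
  have hχapp : ∀ x : ZMod p, x ≠ 0 → χ x = φ (eC p g x) := by
    intro x hx
    show (if x = 0 then 0 else φ (eC p g x)) = φ (eC p g x)
    rw [if_neg hx]
  -- generic Jacobi-sum computation
  have hsum_eq : ∀ (ψ : MulChar (ZMod p) ℂ) (σ : ZMod 3 → ZMod 3),
      (∀ x ∈ ((univ : Finset (ZMod p)) \ {0, 1}), ψ x * ψ (1 - x) = φ (σ (mC p g x))) →
      jacobiSum ψ ψ = (Ct p g 0 : ℂ) * φ (σ 0) + Ct p g 1 * φ (σ 1) + Ct p g 2 * φ (σ 2) := by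
    intro ψ σ hψ
    rw [jacobiSum_eq_sum_sdiff, sum_congr rfl hψ,
      ← Finset.sum_fiberwise' ((univ : Finset (ZMod p)) \ {0, 1}) (mC p g) (fun t => φ (σ t))]
    have inner : ∀ t : ZMod 3,
        ∑ _x ∈ (((univ : Finset (ZMod p)) \ {0, 1}).filter fun x => mC p g x = t), φ (σ t)
          = (Ct p g t : ℂ) * φ (σ t) := by
      intro t
      rw [sum_const, Ct, nsmul_eq_mul]
    rw [sum_congr rfl (fun t _ => inner t), sum_zmod3 (fun t => (Ct p g t : ℂ) * φ (σ t))]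
  have hχmul : ∀ x ∈ ((univ : Finset (ZMod p)) \ {0, 1}),
      χ x * χ (1 - x) = φ (id (mC p g x)) := by
    intro x hx
    rw [mem_s_iff] at hx
    obtain ⟨hx0, hx1⟩ := hx
    rw [hχapp x hx0, hχapp _ (sub_ne_zero.mpr (Ne.symm hx1)), ← φ_add]
    rfl
  have hχinvmul : ∀ x ∈ ((univ : Finset (ZMod p)) \ {0, 1}),
      χ⁻¹ x * χ⁻¹ (1 - x) = φ ((fun t => -t) (mC p g x)) := by
    intro x hx
    rw [mem_s_iff] at hx
    obtain ⟨hx0, hx1⟩ := hx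
    have h1x : (1 : ZMod p) - x ≠ 0 := sub_ne_zero.mpr (Ne.symm hx1)
    rw [MulChar.inv_apply' χ x, MulChar.inv_apply' χ (1 - x),
      hχapp _ (inv_ne_zero hx0), hχapp _ (inv_ne_zero h1x),
      eC_inv hp hp6 hg hx0, eC_inv hp hp6 hg h1x, ← φ_add]
    show φ (-eC p g x + -eC p g (1 - x)) = φ (-(mC p g x))
    congr 1
    rw [mC]
    ring
  have hJ := hsum_eq χ id hχmul
  have hJ' := hsum_eq χ⁻¹ (fun t => -t) hχinvmul
  rw [show (id (0 : ZMod 3)) = 0 from rfl, show (id (1 : ZMod 3)) = 1 from rfl,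
    show (id (2 : ZMod 3)) = 2 from rfl, hφ0, hφ1, hφ2] at hJ
  rw [show (-(0 : ZMod 3)) = 0 from by decide,
    show (-(1 : ZMod 3)) = 2 from by decide,
    show (-(2 : ZMod 3)) = 1 from by decide, hφ0, hφ1, hφ2] at hJ'
  -- nontriviality of χ and χ²
  have hχg : χ g = ω := by rw [hχapp g hg0, eC_g hp hp6 hg, hφ1]
  have hχ1 : χ ≠ 1 := by
    intro h
    have h1 : χ g = 1 := by rw [h, MulChar.one_apply (isUnit_iff_ne_zero.mpr hg0)]
    rw [hχg] at h1
    exact hω.ne_one (by norm_num) h1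
  have hχχ1 : χ * χ ≠ 1 := by
    intro h
    have h1 : (χ * χ) g = 1 := by rw [h, MulChar.one_apply (isUnit_iff_ne_zero.mpr hg0)]
    rw [MulChar.mul_apply, hχg] at h1
    exact hω.pow_ne_one_of_pos_of_lt (l := 2) (by norm_num) (by norm_num)
      (by rw [sq]; exact h1)
  -- the norm relation
  have hchar : ringChar ℂ ≠ ringChar (ZMod p) := by
    rw [ringChar.eq_zero, ZMod.ringChar_zmod_n]
    omega
  have hJJ : jacobiSum χ χ * jacobiSum χ⁻¹ χ⁻¹ = (p : ℂ) := by
    rw [jacobiSum_mul_jacobiSum_inv hchar hχ1 hχ1 hχχ1, ZMod.card]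
  -- counting consequences of the hypothesis
  have hN : Nk p g 0 1 = Nk p g 0 2 := by
    rw [← transNum_eq hp hp6 hg 0 1, ← transNum_eq hp hp6 hg 0 2]
    exact hEq
  have h10 : Nk p g 1 0 = Nk p g 0 1 := (Nk_symm hp hp6 hg 0 1).symm
  have h22 : Nk p g 2 2 = Nk p g 1 0 := by
    have h := Nk_inv hp hp6 hg 2 2
    rwa [show (-(2 : ZMod 3)) = 1 from by decide,
      show ((2 : ZMod 3) - 2) = 0 from by decide] at h
  have h20 : Nk p g 2 0 = Nk p g 0 2 := Nk_symm hp hp6 hg 2 0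
  have h11 : Nk p g 1 1 = Nk p g 2 0 := by
    have h := Nk_inv hp hp6 hg 1 1
    rwa [show (-(1 : ZMod 3)) = 2 from by decide,
      show ((1 : ZMod 3) - 1) = 0 from by decide] at h
  have hC1 : Ct p g 1 = 3 * Nk p g 0 1 := by
    rw [Ct_eq hp hp6 hg 1, show ((1 : ZMod 3) - 1) = 0 from by decide,
      show ((1 : ZMod 3) - 2) = 2 from by decide, h22, h10]
    omega
  have hC2 : Ct p g 2 = 3 * Nk p g 0 2 := by
    rw [Ct_eq hp hp6 hg 2, show ((2 : ZMod 3) - 1) = 1 from by decide,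
      show ((2 : ZMod 3) - 2) = 0 from by decide, h11, h20]
    omega
  have hC12 : Ct p g 1 = Ct p g 2 := by rw [hC1, hC2, hN]
  -- finish
  have hsum : (1 : ℂ) + ω + ω ^ 2 = 0 := by
    have h := hω.geom_sum_eq_zero (by norm_num)
    rw [Finset.sum_range_succ, Finset.sum_range_succ, Finset.sum_range_one,
      pow_zero, pow_one] at h
    exact h
  have hC12' : (Ct p g 2 : ℂ) = (Ct p g 1 : ℂ) := by exact_mod_cast hC12.symm
  have e1 : jacobiSum χ χ = (((Ct p g 0 : ℤ) - (Ct p g 1 : ℤ) : ℤ) : ℂ) := by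
    rw [hJ]
    push_cast
    linear_combination ((Ct p g 1 : ℂ)) * hsum + ω ^ 2 * hC12'
  have e2 : jacobiSum χ⁻¹ χ⁻¹ = (((Ct p g 0 : ℤ) - (Ct p g 1 : ℤ) : ℤ) : ℂ) := by
    rw [hJ']
    push_cast
    linear_combination ((Ct p g 1 : ℂ)) * hsum + ω * hC12'
  set z : ℤ := (Ct p g 0 : ℤ) - (Ct p g 1 : ℤ) with hz
  have hzz : z * z = (p : ℤ) := by
    have h := hJJ
    rw [e1, e2] at h
    exact_mod_cast h
  have hnn : z.natAbs * z.natAbs = p := by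
    have h := Int.natAbs_mul_self (a := z)
    rw [hzz] at h
    exact_mod_cast h
  rcases hp.eq_one_or_self_of_dvd z.natAbs ⟨z.natAbs, hnn.symm⟩ with h | h
  · rw [h, one_mul] at hnn
    omega
  · rw [h] at hnn
    nlinarith
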